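/- Neither Q(8) × Z/2Z nor the central product of D₈ with Z/4Z (presented as ⟨a, c, x ∣ a⁴ = x² = 1, a² = c², ac = ca, cx = xc, xax = a⁻¹⟩) has a proper subgroup with abelianization isomorphic to (Z/2Z)³. -/

import Mathlib

/-- Relators for the central product of D₈ and Z/4Z,
⟨a, c, x ∣ a⁴ = x² = 1, a² = c², ac = ca, cx = xc, xax = a⁻¹⟩,
with a = 0, c = 1, x = 2. -/
def CPRels : Set (FreeGroup (Fin 3)) :=
  {(FreeGroup.of 0) ^ 4, (FreeGroup.of 2) ^ 2,
   (FreeGroup.of 0) ^ 2 * ((FreeGroup.of 1) ^ 2)⁻¹,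
   FreeGroup.of 0 * FreeGroup.of 1 * (FreeGroup.of 0)⁻¹ * (FreeGroup.of 1)⁻¹,
   FreeGroup.of 1 * FreeGroup.of 2 * (FreeGroup.of 1)⁻¹ * (FreeGroup.of 2)⁻¹,
   FreeGroup.of 2 * FreeGroup.of 0 * FreeGroup.of 2 * FreeGroup.of 0}

namespace CPAux

/-! ### A concrete model of the central product of D₈ and Z/4Z -/

@[ext] structure G0 where
  i : ZMod 4
  j : ZMod 2
  k : ZMod 2
deriving DecidableEq, Fintype

namespace G0

instance : Mul G0 :=
  ⟨fun g h => ⟨g.i + (if g.k = 1 then -h.i else h.i) + (if g.j = 1 ∧ h.j = 1 then 2 else 0),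
    g.j + h.j, g.k + h.k⟩⟩
instance : One G0 := ⟨⟨0, 0, 0⟩⟩
instance : Inv G0 := ⟨fun g => g * g * g⟩

set_option maxHeartbeats 2000000 in
theorem massoc : ∀ a b c : G0, a * b * c = a * (b * c) := by decide

instance : Group G0 where
  mul_assoc := massoc
  one_mul := by decide
  mul_one := by decide
  inv_mul_cancel := by decide

theorem card_G0 : Nat.card G0 = 16 := by
  rw [Nat.card_eq_fintype_card]; decide

end G0

/-! ### Relations in the presented group -/

abbrev P := PresentedGroup CPRels

def a : P := PresentedGroup.of 0
def c : P := PresentedGroup.of 1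
def x : P := PresentedGroup.of 2

lemma rel_one {r : FreeGroup (Fin 3)} (h : r ∈ CPRels) : PresentedGroup.mk CPRels r = 1 :=
  (QuotientGroup.eq_one_iff r).2 (Subgroup.subset_normalClosure h)

lemma ha4 : a ^ 4 = 1 := by
  have := rel_one (show (FreeGroup.of 0 : FreeGroup (Fin 3)) ^ 4 ∈ CPRels by
    simp [CPRels])
  simpa [a, PresentedGroup.of, map_pow] using this

lemma hx2 : x ^ 2 = 1 := by
  have := rel_one (show (FreeGroup.of 2 : FreeGroup (Fin 3)) ^ 2 ∈ CPRels by
    simp [CPRels])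
  simpa [x, PresentedGroup.of, map_pow] using this

lemma hc2 : c ^ 2 = a ^ 2 := by
  have := rel_one (show (FreeGroup.of 0 : FreeGroup (Fin 3)) ^ 2 *
      ((FreeGroup.of 1 : FreeGroup (Fin 3)) ^ 2)⁻¹ ∈ CPRels by simp [CPRels])
  have h2 : a ^ 2 * (c ^ 2)⁻¹ = 1 := by
    simpa [a, c, PresentedGroup.of, map_pow, map_mul, map_inv] using this
  have := mul_inv_eq_one.mp h2
  exact this.symm

lemma hac : a * c = c * a := by
  have := rel_one (show (FreeGroup.of 0 : FreeGroup (Fin 3)) * FreeGroup.of 1 *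
      (FreeGroup.of 0)⁻¹ * (FreeGroup.of 1)⁻¹ ∈ CPRels by simp [CPRels])
  have h2 : a * c * a⁻¹ * c⁻¹ = 1 := by
    simpa [a, c, PresentedGroup.of, map_mul, map_inv] using this
  have h3 := mul_inv_eq_one.mp h2
  exact mul_inv_eq_iff_eq_mul.mp h3

lemma hcx : c * x = x * c := by
  have := rel_one (show (FreeGroup.of 1 : FreeGroup (Fin 3)) * FreeGroup.of 2 *
      (FreeGroup.of 1)⁻¹ * (FreeGroup.of 2)⁻¹ ∈ CPRels by simp [CPRels])
  have h2 : c * x * c⁻¹ * x⁻¹ = 1 := by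
    simpa [c, x, PresentedGroup.of, map_mul, map_inv] using this
  have h3 := mul_inv_eq_one.mp h2
  exact mul_inv_eq_iff_eq_mul.mp h3

lemma hxaxa : x * a * x * a = 1 := by
  have := rel_one (show (FreeGroup.of 2 : FreeGroup (Fin 3)) * FreeGroup.of 0 *
      FreeGroup.of 2 * FreeGroup.of 0 ∈ CPRels by simp [CPRels])
  simpa [a, x, PresentedGroup.of, map_mul] using this

lemma hxinv : x⁻¹ = x := by
  have : x * x = 1 := by simpa [pow_two] using hx2
  exact inv_eq_of_mul_eq_one_right this

lemma hsemi : SemiconjBy x a a⁻¹ := by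
  have h1 : x * a * x = a⁻¹ := mul_eq_one_iff_eq_inv.mp hxaxa
  have h2 : x * a = a⁻¹ * x⁻¹ := eq_mul_inv_of_mul_eq h1
  rw [hxinv] at h2
  exact h2

/-! ### Normal form pieces -/

def A (i : ZMod 4) : P := a ^ i.val
def C (j : ZMod 2) : P := c ^ j.val
def X (k : ZMod 2) : P := x ^ k.val

lemma zmod2_cases (z : ZMod 2) : z = 0 ∨ z = 1 := by revert z; decide

lemma apow_mod (m : ℕ) : a ^ m = a ^ (m % 4) := pow_eq_pow_mod m ha4
lemma xpow_mod (m : ℕ) : x ^ m = x ^ (m % 2) := pow_eq_pow_mod m hx2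

lemma AA1 (i i' : ZMod 4) : A i * A i' = A (i + i') := by
  rw [A, A, A, ← pow_add, ZMod.val_add, ← apow_mod]

lemma XX1 (k k' : ZMod 2) : X k * X k' = X (k + k') := by
  rw [X, X, X, ← pow_add, ZMod.val_add, ← xpow_mod]

lemma CC1 (j j' : ZMod 2) : C j * C j' = A (if j = 1 ∧ j' = 1 then 2 else 0) * C (j + j') := by
  rcases zmod2_cases j with rfl | rfl <;> rcases zmod2_cases j' with rfl | rfl <;>
    simp [A, C, hc2]
  · have hv : ((2 : ZMod 4)).val = 2 := rfl
    have h1 : ((1 : ZMod 2)).val = 1 := rfl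
    have h2 : ((1 + 1 : ZMod 2)).val = 0 := rfl
    show c ^ _ * c ^ _ = a ^ _ * c ^ _
    rw [h1, h2, hv, pow_one, pow_zero, mul_one, ← pow_two, hc2]

lemma CA1 (j : ZMod 2) (i : ZMod 4) : C j * A i = A i * C j := by
  have h : Commute a c := hac
  exact (h.symm.pow_pow j.val i.val : _)

lemma XC1 (k j : ZMod 2) : X k * C j = C j * X k := by
  have h : Commute c x := hcx
  exact (h.symm.pow_pow k.val j.val : _)

lemma Aneg (i : ZMod 4) : A (-i) = (A i)⁻¹ := by
  have h : A (-i) * A i = 1 := by rw [AA1]; simp [A]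
  exact eq_inv_of_mul_eq_one_left h

lemma XA1 (k : ZMod 2) (i : ZMod 4) :
    X k * A i = A (if k = 1 then -i else i) * X k := by
  rcases zmod2_cases k with rfl | rfl
  · simp [X]
  · have hs : SemiconjBy x (a ^ i.val) ((a⁻¹) ^ i.val) := hsemi.pow_right i.val
    have h1 : x * a ^ i.val = (A i)⁻¹ * x := by
      simpa [A, inv_pow] using hs.eq
    have h2 : X 1 * A i = (A i)⁻¹ * X 1 := by
      simpa [X, A, show ((1 : ZMod 2)).val = 1 from rfl] using h1
    rw [h2, ← Aneg]
    norm_num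

/- tail versions -/
lemma AA2 (i i' : ZMod 4) (y : P) : A i * (A i' * y) = A (i + i') * y := by
  rw [← mul_assoc, AA1]
lemma XX2 (k k' : ZMod 2) (y : P) : X k * (X k' * y) = X (k + k') * y := by
  rw [← mul_assoc, XX1]
lemma CC2 (j j' : ZMod 2) (y : P) :
    C j * (C j' * y) = A (if j = 1 ∧ j' = 1 then 2 else 0) * (C (j + j') * y) := by
  rw [← mul_assoc, CC1, mul_assoc]
lemma CA2 (j : ZMod 2) (i : ZMod 4) (y : P) : C j * (A i * y) = A i * (C j * y) := by
  rw [← mul_assoc, CA1, mul_assoc]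
lemma XC2 (k j : ZMod 2) (y : P) : X k * (C j * y) = C j * (X k * y) := by
  rw [← mul_assoc, XC1, mul_assoc]
lemma XA2 (k : ZMod 2) (i : ZMod 4) (y : P) :
    X k * (A i * y) = A (if k = 1 then -i else i) * (X k * y) := by
  rw [← mul_assoc, XA1, mul_assoc]

/-! ### The isomorphism -/

def psi0 : G0 → P := fun g => A g.i * C g.j * X g.k

lemma mul_def (g h : G0) : g * h =
    ⟨g.i + (if g.k = 1 then -h.i else h.i) + (if g.j = 1 ∧ h.j = 1 then 2 else 0),
     g.j + h.j, g.k + h.k⟩ := rfl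

lemma psi0_mul (g h : G0) : psi0 (g * h) = psi0 g * psi0 h := by
  simp only [psi0, mul_def, mul_assoc, XA2, XA1, CA2, CA1, XC2, XC1, AA2, AA1, CC2, CC1,
    XX2, XX1]
  rw [add_assoc]

def psi : G0 →* P := MonoidHom.mk' psi0 (fun g h => psi0_mul g h)

lemma psi_surjective : Function.Surjective psi := by
  rw [← MonoidHom.range_eq_top]
  rw [← top_le_iff, ← PresentedGroup.closure_range_of CPRels, Subgroup.closure_le]
  rintro - ⟨i, rfl⟩
  fin_cases i
  · exact ⟨⟨1, 0, 0⟩, by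
      simp [psi, MonoidHom.mk', psi0, A, C, X, a, show ((1 : ZMod 4)).val = 1 from rfl]⟩
  · exact ⟨⟨0, 1, 0⟩, by
      simp [psi, MonoidHom.mk', psi0, A, C, X, c, show ((1 : ZMod 2)).val = 1 from rfl]⟩
  · exact ⟨⟨0, 0, 1⟩, by
      simp [psi, MonoidHom.mk', psi0, A, C, X, x, show ((1 : ZMod 2)).val = 1 from rfl]⟩

def fgen : Fin 3 → G0 := ![⟨1, 0, 0⟩, ⟨0, 1, 0⟩, ⟨0, 0, 1⟩]

lemma hrels : ∀ r ∈ CPRels, FreeGroup.lift fgen r = 1 := by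
  intro r hr
  simp only [CPRels, Set.mem_insert_iff, Set.mem_singleton_iff] at hr
  rcases hr with rfl | rfl | rfl | rfl | rfl | rfl <;>
    simp only [map_pow, map_mul, map_inv, FreeGroup.lift_apply_of] <;> decide

def phi : P →* G0 := PresentedGroup.toGroup hrels

lemma phi_psi (g : G0) : phi (psi g) = g := by
  have hA : ∀ i : ZMod 4, phi (A i) = (⟨1,0,0⟩ : G0) ^ i.val := by
    intro i; rw [A, map_pow]; congr 1
  have hC : ∀ j : ZMod 2, phi (C j) = (⟨0,1,0⟩ : G0) ^ j.val := by
    intro j; rw [C, map_pow]; congr 1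
  have hX : ∀ k : ZMod 2, phi (X k) = (⟨0,0,1⟩ : G0) ^ k.val := by
    intro k; rw [X, map_pow]; congr 1
  show phi (A g.i * C g.j * X g.k) = g
  rw [map_mul, map_mul, hA, hC, hX]
  revert g; decide

lemma psi_bijective : Function.Bijective psi :=
  ⟨Function.LeftInverse.injective phi_psi, psi_surjective⟩

noncomputable def e : G0 ≃* P := MulEquiv.ofBijective psi psi_bijective

instance : Finite P := Finite.of_surjective psi psi_surjective

lemma card_P : Nat.card P = 16 := by
  rw [← Nat.card_congr e.toEquiv]; exact G0.card_G0

/-! ### The common counting lemma -/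

lemma key {G : Type*} [Group G] [Finite G] (hG : Nat.card G = 16)
    (H : Subgroup G) (hH : H ≠ ⊤)
    (f : Abelianization H ≃* Multiplicative (ZMod 2 × ZMod 2 × ZMod 2)) :
    Nat.card H = 8 ∧ ∀ h ∈ H, h ^ 2 = 1 := by
  have hM : Nat.card (Multiplicative (ZMod 2 × ZMod 2 × ZMod 2)) = 8 := by
    rw [Nat.card_eq_fintype_card]; rfl
  have hAb : Nat.card (Abelianization H) = 8 := by
    rw [Nat.card_congr f.toEquiv, hM]
  have hdvd1 : Nat.card H ∣ 16 := hG ▸ Subgroup.card_subgroup_dvd_card H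
  have hdvd2 : (8 : ℕ) ∣ Nat.card H := by
    have := Subgroup.card_eq_card_quotient_mul_card_subgroup (commutator H)
    rw [show Nat.card (H ⧸ commutator H) = Nat.card (Abelianization H) from rfl, hAb] at this
    exact ⟨_, this⟩
  have hne : Nat.card H ≠ 16 := by
    intro h
    exact hH (Subgroup.eq_top_of_card_eq H (h.trans hG.symm))
  have hcard : Nat.card H = 8 := by
    obtain ⟨k, hk⟩ := hdvd2
    have hk' : k ∣ 2 := by
      have : 8 * k ∣ 8 * 2 := by rw [← hk]; exact hdvd1
      exact (Nat.mul_dvd_mul_iff_left (by norm_num)).1 this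
    have hk0 : k ≠ 0 := by
      intro h0; rw [h0, Nat.mul_zero] at hk
      exact (Nat.card_pos (α := H)).ne' hk
    have hk1 : 1 ≤ k := Nat.one_le_iff_ne_zero.2 hk0
    have hk3 : k ≤ 2 := Nat.le_of_dvd (by norm_num) hk'
    interval_cases k
    · omega
    · omega
  refine ⟨hcard, ?_⟩
  have hexp : ∀ m : Multiplicative (ZMod 2 × ZMod 2 × ZMod 2), m ^ 2 = 1 := by decide
  set g : H →* Multiplicative (ZMod 2 × ZMod 2 × ZMod 2) :=
    f.toMonoidHom.comp Abelianization.of with hg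
  have hsurj : Function.Surjective g := by
    apply Function.Surjective.comp f.surjective
    exact fun y => Quotient.inductionOn' y (fun h => ⟨h, rfl⟩)
  have hbij : Function.Bijective g :=
    (Nat.bijective_iff_surjective_and_card g).2 ⟨hsurj, by rw [hcard, hM]⟩
  intro h hh
  have h2 : (⟨h, hh⟩ : H) ^ 2 = 1 := by
    apply hbij.1
    rw [map_pow, map_one]
    exact hexp _
  exact congrArg Subtype.val h2

/-! ### No elementary abelian subgroup of order 8 in the two groups -/

lemma q8_count :
    Nat.card {g : QuaternionGroup 2 × Multiplicative (ZMod 2) // g ^ 2 = 1} = 4 := by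
  rw [Nat.card_eq_fintype_card]; decide

lemma q8_card : Nat.card (QuaternionGroup 2 × Multiplicative (ZMod 2)) = 16 := by
  rw [Nat.card_eq_fintype_card]; decide

lemma g0_count : Nat.card {g : G0 // g ^ 2 = 1} = 8 := by
  rw [Nat.card_eq_fintype_card]; decide

end CPAux

open CPAux in
/-- Neither Q(8) × Z/2Z nor the central product of D₈ with Z/4Z has a proper
subgroup with abelianization isomorphic to (Z/2Z)³. -/
theorem stmt14 :
    (∀ H : Subgroup (QuaternionGroup 2 × Multiplicative (ZMod 2)), H ≠ ⊤ →
      ¬ Nonempty (Abelianization H ≃*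
          Multiplicative (ZMod 2 × ZMod 2 × ZMod 2))) ∧
    (∀ H : Subgroup (PresentedGroup CPRels), H ≠ ⊤ →
      ¬ Nonempty (Abelianization H ≃*
          Multiplicative (ZMod 2 × ZMod 2 × ZMod 2))) := by
  constructor
  · rintro H hH ⟨f⟩
    obtain ⟨hcard, hsq⟩ := key q8_card H hH f
    have hinj : Function.Injective
        (fun h : H => (⟨h.1, hsq h.1 h.2⟩ : {g : QuaternionGroup 2 × Multiplicative (ZMod 2) // g ^ 2 = 1})) := by
      intro u v huv
      have h1 := congrArg Subtype.val huv
      exact Subtype.ext h1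
    have hle := Nat.card_le_card_of_injective _ hinj
    rw [hcard, q8_count] at hle
    omega
  · rintro H hH ⟨f⟩
    obtain ⟨hcard, hsq⟩ := key card_P H hH f
    -- pull back along e : G0 ≃* P
    set H' : Subgroup G0 := H.comap e.toMonoidHom with hH'
    have hmem : ∀ g : G0, g ∈ H' ↔ e g ∈ H := fun g => Iff.rfl
    have hcard' : Nat.card H' = 8 := by
      rw [← hcard]
      exact Nat.card_congr (e.toEquiv.subtypeEquiv (fun g => Iff.rfl))
    have hsq' : ∀ g ∈ H', g ^ 2 = 1 := by
      intro g hg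
      have : e (g ^ 2) = e 1 := by
        rw [map_pow, map_one]
        exact hsq (e g) hg
      exact e.injective this
    have hsub : (H' : Set G0) ⊆ {g : G0 | g ^ 2 = 1} := fun g hg => hsq' g hg
    have hS : ({g : G0 | g ^ 2 = 1} : Set G0).ncard = 8 := by
      rw [← Nat.card_coe_set_eq]
      exact g0_count
    have hHn : (H' : Set G0).ncard = 8 := by
      rw [← Nat.card_coe_set_eq]
      exact hcard'
    have heq : (H' : Set G0) = {g : G0 | g ^ 2 = 1} :=
      Set.eq_of_subset_of_ncard_le hsub (by rw [hS, hHn]) (Set.toFinite _)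
    have hx0 : (⟨0, 0, 1⟩ : G0) ∈ H' := by
      rw [← Subgroup.mem_carrier, show H'.carrier = (H' : Set G0) from rfl, heq]
      decide
    have hy0 : (⟨1, 1, 0⟩ : G0) ∈ H' := by
      rw [← Subgroup.mem_carrier, show H'.carrier = (H' : Set G0) from rfl, heq]
      decide
    have hxy : (⟨0, 0, 1⟩ : G0) * ⟨1, 1, 0⟩ ∈ H' := mul_mem hx0 hy0
    have := hsq' _ hxy
    revert this
    decide
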